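/- (Predictive variance bound via Schur complement) Let R be a symmetric positive definite (t×t) covariance matrix partitioned with R₁₁ = σ² (scalar), and let t(x) = (σ² ρ, t₂(x)ᵀ)ᵀ where ρ ∈ [−1,1]. Then σ² − t(x)ᵀ R⁻¹ t(x) ≤ σ² − σ² ρ² − Γᵀ P Γ ≤ σ²(1 − ρ²), where Γ = R₂₁ R₁₁⁻¹ σ²ρ − t₂(x) and P⁻¹ = R₂₂ − R₂₁R₁₁⁻¹R₁₂ is the (positive definite) Schur complement. -/

import Mathlib

open Matrix

/-- Predictive variance bound via the Schur complement: with `R` positive definite,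
`R₁₁ = σ²`, and `t(x) = (σ²ρ, t₂(x))`, we have
`σ² − t(x)ᵀR⁻¹t(x) ≤ σ² − σ²ρ² − ΓᵀPΓ ≤ σ²(1 − ρ²)`. -/
theorem predictive_variance_bound (n : ℕ) (σsq ρ : ℝ) (hσ : 0 < σsq) (hρ : |ρ| ≤ 1)
    (R12 : Matrix (Fin 1) (Fin n) ℝ) (R22 : Matrix (Fin n) (Fin n) ℝ)
    (t₂ : Fin n → ℝ)
    (hR : (Matrix.fromBlocks (σsq • (1 : Matrix (Fin 1) (Fin 1) ℝ)) R12 R12ᵀ R22).PosDef) :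
    let R := Matrix.fromBlocks (σsq • (1 : Matrix (Fin 1) (Fin 1) ℝ)) R12 R12ᵀ R22
    let tv : Fin 1 ⊕ Fin n → ℝ := Sum.elim (fun _ => σsq * ρ) t₂
    let Γ : Fin n → ℝ := fun i => ρ * R12ᵀ i 0 - t₂ i
    let P := (R22 - R12ᵀ * (σsq⁻¹ • (1 : Matrix (Fin 1) (Fin 1) ℝ)) * R12)⁻¹
    σsq - tv ⬝ᵥ (R⁻¹ *ᵥ tv) ≤ σsq - σsq * ρ ^ 2 - Γ ⬝ᵥ (P *ᵥ Γ) ∧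
      σsq - σsq * ρ ^ 2 - Γ ⬝ᵥ (P *ᵥ Γ) ≤ σsq * (1 - ρ ^ 2) := by
  intro R tv Γ P
  set A : Matrix (Fin 1) (Fin 1) ℝ := σsq • (1 : Matrix (Fin 1) (Fin 1) ℝ) with hAdef
  set S : Matrix (Fin n) (Fin n) ℝ := R22 - R12ᵀ * (σsq⁻¹ • (1 : Matrix (Fin 1) (Fin 1) ℝ)) * R12 with hSdef
  have hPS : P = S⁻¹ := rfl
  have hA : A.PosDef := by
    refine .of_dotProduct_mulVec_pos (by rw [Matrix.IsHermitian, hAdef]; ext i j; fin_cases i; fin_cases j; simp) fun x hx => ?_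
    have : star x ⬝ᵥ (A *ᵥ x) = σsq * (star x ⬝ᵥ x) := by
      simp [hAdef, smul_mulVec, dotProduct_smul]
    rw [this]
    exact mul_pos hσ (dotProduct_star_self_pos_iff.mpr hx)
  haveI : Invertible A := hA.isUnit.invertible
  have hAinv : A⁻¹ = σsq⁻¹ • (1 : Matrix (Fin 1) (Fin 1) ℝ) := by
    apply inv_eq_left_inv
    rw [hAdef, smul_mul_smul_comm, Matrix.one_mul, inv_mul_cancel₀ hσ.ne', one_smul]
  have hRt : R12ᴴ = R12ᵀ := by ext i j; simp
  have hS : S.PosDef := by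
    refine .of_dotProduct_mulVec_pos ?_ ?_
    · have h22 : R22.IsHermitian := by
        have := hR.1
        rw [isHermitian_fromBlocks_iff] at this
        exact this.2.2.2
      have hm : (R12ᵀ * (σsq⁻¹ • (1 : Matrix (Fin 1) (Fin 1) ℝ)) * R12).IsHermitian := by
        rw [Matrix.IsHermitian]
        ext i j
        simp [mul_apply, Fin.sum_univ_one]
        ring
      exact h22.sub hm
    · intro x hx
      have key := schur_complement_eq₁₁ (α := ℝ) R12 R22 (-((A⁻¹ * R12) *ᵥ x)) x hA.1
      rw [hRt, neg_add_cancel] at key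
      simp only [dotProduct_zero, vecMul_zero, zero_dotProduct, zero_add] at key
      have hv : (-((A⁻¹ * R12) *ᵥ x) ⊕ᵥ x) ≠ 0 := by
        intro h
        apply hx
        ext j
        have := congrFun h (Sum.inr j)
        simpa using this
      have hpos := hR.dotProduct_mulVec_pos hv
      rw [dotProduct_mulVec] at hpos
      rw [show star x ⬝ᵥ (S *ᵥ x) = star x ᵥ* S ⬝ᵥ x from dotProduct_mulVec _ _ _, hSdef, ← hAinv, ← key]
      exact hpos
  haveI hSinv : Invertible S := hS.isUnit.invertible
  have hP : P.PosDef := hPS ▸ hS.inv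
  have hSP : S * P = 1 := by rw [hPS]; exact mul_nonsing_inv S ((Matrix.isUnit_iff_isUnit_det S).mp hS.isUnit)
  have hΓdef : Γ = fun i => ρ * R12ᵀ i 0 - t₂ i := rfl
  have htvdef : tv = Sum.elim (fun _ => σsq * ρ) t₂ := rfl
  have hRdef : R = fromBlocks A R12 R12ᵀ R22 := rfl
  set u : ℝ := (R12 *ᵥ (P *ᵥ Γ)) 0 with hu
  set w : Fin 1 ⊕ Fin n → ℝ := Sum.elim (fun _ : Fin 1 => ρ + σsq⁻¹ * u) (-(P *ᵥ Γ)) with hw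
  have hM : R22 * P = 1 + R12ᵀ * (σsq⁻¹ • (1 : Matrix (Fin 1) (Fin 1) ℝ)) * R12 * P := by
    have h2 : R22 * P - R12ᵀ * (σsq⁻¹ • (1 : Matrix (Fin 1) (Fin 1) ℝ)) * R12 * P = 1 := by
      rw [← Matrix.sub_mul, ← hSdef]; exact hSP
    rw [sub_eq_iff_eq_add] at h2
    exact h2
  have hR22 : R22 *ᵥ (P *ᵥ Γ) = Γ + fun j => R12ᵀ j 0 * (σsq⁻¹ * u) := by
    rw [mulVec_mulVec, hM, add_mulVec, one_mulVec]
    congr 1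
    rw [← Matrix.mulVec_mulVec, ← Matrix.mulVec_mulVec, ← Matrix.mulVec_mulVec,
      show ((σsq⁻¹ • (1 : Matrix (Fin 1) (Fin 1) ℝ)) *ᵥ (R12 *ᵥ (P *ᵥ Γ)))
        = σsq⁻¹ • (R12 *ᵥ (P *ᵥ Γ)) by rw [smul_mulVec, one_mulVec]]
    ext j
    simp only [mulVec, dotProduct, Fin.sum_univ_one, Pi.smul_apply, smul_eq_mul, hu]
  have hRw : R *ᵥ w = tv := by
    rw [hRdef, hw, htvdef, fromBlocks_mulVec]
    ext i
    cases i with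
    | inl i =>
      have hcomp : (R12 *ᵥ (Sum.elim (fun _ : Fin 1 => ρ + σsq⁻¹ * u) (-(P *ᵥ Γ)) ∘ Sum.inr)) i = -u := by
        have hi : i = 0 := Subsingleton.elim _ _
        subst hi
        simp [hu, mulVec, dotProduct]
      simp only [Sum.elim_inl, Pi.add_apply, hcomp]
      rw [hAdef]
      simp [smul_mulVec]
      field_simp
      ring
    | inr j =>
      have h1 : (R12ᵀ *ᵥ (Sum.elim (fun _ : Fin 1 => ρ + σsq⁻¹ * u) (-(P *ᵥ Γ)) ∘ Sum.inl)) j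
          = R12ᵀ j 0 * (ρ + σsq⁻¹ * u) := by
        simp [mulVec, dotProduct, Fin.sum_univ_one]
      have h2 : (R22 *ᵥ (Sum.elim (fun _ : Fin 1 => ρ + σsq⁻¹ * u) (-(P *ᵥ Γ)) ∘ Sum.inr)) j
          = -(Γ j + R12ᵀ j 0 * (σsq⁻¹ * u)) := by
        have hcc : (Sum.elim (fun _ : Fin 1 => ρ + σsq⁻¹ * u) (-(P *ᵥ Γ)) ∘ Sum.inr) = -(P *ᵥ Γ) := rfl
        rw [hcc, mulVec_neg, hR22]
        simp
      simp only [Sum.elim_inr, Pi.add_apply, h1, h2]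
      simp only [hΓdef]
      ring
  have hdetR : IsUnit R.det := (Matrix.isUnit_iff_isUnit_det R).mp hR.isUnit
  have hw2 : R⁻¹ *ᵥ tv = w := by
    rw [← hRw, mulVec_mulVec, nonsing_inv_mul R hdetR, one_mulVec]
  have hΓu : Γ ⬝ᵥ (P *ᵥ Γ) = ρ * u - t₂ ⬝ᵥ (P *ᵥ Γ) := by
    rw [hu]
    set v := P *ᵥ Γ with hv
    rw [hΓdef]
    simp only [dotProduct, mulVec, Fin.isValue, transpose_apply, sub_mul,
      Finset.sum_sub_distrib, Finset.mul_sum]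
    congr 1
    exact Finset.sum_congr rfl fun i _ => by ring
  have hmain : tv ⬝ᵥ (R⁻¹ *ᵥ tv) = σsq * ρ ^ 2 + Γ ⬝ᵥ (P *ᵥ Γ) := by
    rw [hw2, hw, htvdef, sumElim_dotProduct_sumElim, hΓu]
    simp [dotProduct, Fin.sum_univ_one]
    field_simp
    ring
  have hΓP : 0 ≤ Γ ⬝ᵥ (P *ᵥ Γ) := by
    have := hP.posSemidef.dotProduct_mulVec_nonneg Γ
    simpa using this
  constructor
  · rw [hmain]; ring_nf; exact le_refl _
  · nlinarith [hΓP]
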